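/- Let k be a field, V a k-vector space, and R a bijective k-linear endomorphism of V⊗V. Then R is a cocommutative solution of the Hopf equation (i.e. R¹²R²³ = R²³R¹³R¹² and R¹³R²³ = R²³R¹³) if and only if τ∘R⁻¹∘τ is a commutative solution of the Hopf equation (i.e. it satisfies the Hopf equation and its ¹² and ¹³ versions commute), where τ is the flip map. -/

import Mathlib

open TensorProduct LinearMap

section HopfEq

variable (k V : Type*) [Field k] [AddCommGroup V] [Module k V]

/-- The flip map `τ : V ⊗ V → V ⊗ V`, `τ(v ⊗ w) = w ⊗ v`. -/
noncomputable def flipMap : V ⊗[k] V →ₗ[k] V ⊗[k] V :=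
  (TensorProduct.comm k V V).toLinearMap

variable {k V}

/-- `R¹² = R ⊗ I` as an endomorphism of `V ⊗ V ⊗ V`. -/
noncomputable def map12 (R : V ⊗[k] V →ₗ[k] V ⊗[k] V) :
    V ⊗[k] (V ⊗[k] V) →ₗ[k] V ⊗[k] (V ⊗[k] V) :=
  (TensorProduct.assoc k V V V).toLinearMap ∘ₗ R.rTensor V ∘ₗ
    (TensorProduct.assoc k V V V).symm.toLinearMap

/-- `R²³ = I ⊗ R` as an endomorphism of `V ⊗ V ⊗ V`. -/
noncomputable def map23 (R : V ⊗[k] V →ₗ[k] V ⊗[k] V) :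
    V ⊗[k] (V ⊗[k] V) →ₗ[k] V ⊗[k] (V ⊗[k] V) :=
  R.lTensor V

/-- `R¹³ = (I ⊗ τ)(R ⊗ I)(I ⊗ τ)` as an endomorphism of `V ⊗ V ⊗ V`. -/
noncomputable def map13 (R : V ⊗[k] V →ₗ[k] V ⊗[k] V) :
    V ⊗[k] (V ⊗[k] V) →ₗ[k] V ⊗[k] (V ⊗[k] V) :=
  (flipMap k V).lTensor V ∘ₗ map12 R ∘ₗ (flipMap k V).lTensor V

/-- `R` is a solution of the Hopf equation: `R¹²R²³ = R²³R¹³R¹²`. -/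
def IsHopfSolution (R : V ⊗[k] V →ₗ[k] V ⊗[k] V) : Prop :=
  map12 R ∘ₗ map23 R = map23 R ∘ₗ map13 R ∘ₗ map12 R

/-- `R` is a solution of the pentagonal equation: `R¹²R¹³R²³ = R²³R¹²`. -/
def IsPentagonSolution (R : V ⊗[k] V →ₗ[k] V ⊗[k] V) : Prop :=
  map12 R ∘ₗ map13 R ∘ₗ map23 R = map23 R ∘ₗ map12 R

end HopfEq



lemma conj_inv_inj {G : Type*} [Group G] (p x y : G) :
    p * x⁻¹ * p = p * y⁻¹ * p ↔ x = y := by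
  constructor
  · intro h
    have h1 := mul_right_cancel h
    have h2 := mul_left_cancel h1
    exact inv_injective h2
  · rintro rfl; rfl

lemma aux_hopf {G : Type*} [Group G] (a b c p : G) (hp : p * p = 1) :
    a * b = b * (c * a) ↔
      (p * b⁻¹ * p) * (p * a⁻¹ * p) = (p * a⁻¹ * p) * ((p * c⁻¹ * p) * (p * b⁻¹ * p)) := by
  have hp' : ∀ z : G, p * (p * z) = z := fun z => by rw [← mul_assoc, hp, one_mul]
  have e1 : (p * b⁻¹ * p) * (p * a⁻¹ * p) = p * (a * b)⁻¹ * p := by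
    simp [mul_assoc, hp']
  have e2 : (p * a⁻¹ * p) * ((p * c⁻¹ * p) * (p * b⁻¹ * p)) = p * (b * (c * a))⁻¹ * p := by
    simp [mul_assoc, hp']
  rw [e1, e2, conj_inv_inj]

lemma aux_comm {G : Type*} [Group G] (b c p : G) (hp : p * p = 1) :
    c * b = b * c ↔ (p * b⁻¹ * p) * (p * c⁻¹ * p) = (p * c⁻¹ * p) * (p * b⁻¹ * p) := by
  have hp' : ∀ z : G, p * (p * z) = z := fun z => by rw [← mul_assoc, hp, one_mul]
  have e1 : (p * b⁻¹ * p) * (p * c⁻¹ * p) = p * (c * b)⁻¹ * p := by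
    simp [mul_assoc, hp']
  have e2 : (p * c⁻¹ * p) * (p * b⁻¹ * p) = p * (b * c)⁻¹ * p := by
    simp [mul_assoc, hp']
  rw [e1, e2, conj_inv_inj]
section Aux
variable {k V : Type*} [Field k] [AddCommGroup V] [Module k V]

lemma ext3 {W : Type*} [AddCommGroup W] [Module k W]
    {f g : V ⊗[k] (V ⊗[k] V) →ₗ[k] W}
    (h : ∀ a b c : V, f (a ⊗ₜ (b ⊗ₜ c)) = g (a ⊗ₜ (b ⊗ₜ c))) : f = g := by
  apply TensorProduct.ext'
  intro a y
  induction y using TensorProduct.induction_on with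
  | zero => simp
  | tmul b c => exact h a b c
  | add y z hy hz => rw [tmul_add, map_add, map_add, hy, hz]

noncomputable def bigFlip (k V : Type*) [Field k] [AddCommGroup V] [Module k V] :
    V ⊗[k] (V ⊗[k] V) →ₗ[k] V ⊗[k] (V ⊗[k] V) :=
  (flipMap k V).lTensor V ∘ₗ (TensorProduct.comm k (V ⊗[k] V) V).toLinearMap ∘ₗ
    (TensorProduct.assoc k V V V).symm.toLinearMap

lemma bigFlip_tmul (a b c : V) :
    bigFlip k V (a ⊗ₜ (b ⊗ₜ c)) = c ⊗ₜ (b ⊗ₜ a) := by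
  simp [bigFlip, flipMap]

lemma bigFlip_bigFlip : (bigFlip k V) ∘ₗ (bigFlip k V) = LinearMap.id := by
  apply ext3; intro a b c; simp [bigFlip_tmul]

lemma map12_tmul (f : V ⊗[k] V →ₗ[k] V ⊗[k] V) (a b c : V) :
    map12 f (a ⊗ₜ (b ⊗ₜ c)) = (TensorProduct.assoc k V V V) (f (a ⊗ₜ b) ⊗ₜ c) := by
  simp [map12]

lemma map23_tmul (f : V ⊗[k] V →ₗ[k] V ⊗[k] V) (a b c : V) :
    map23 f (a ⊗ₜ (b ⊗ₜ c)) = a ⊗ₜ f (b ⊗ₜ c) := by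
  simp [map23]

lemma map12_comp (f g : V ⊗[k] V →ₗ[k] V ⊗[k] V) :
    map12 (f ∘ₗ g) = map12 f ∘ₗ map12 g := by
  apply ext3; intro a b c
  simp only [LinearMap.comp_apply, map12_tmul]
  generalize g (a ⊗ₜ b) = x
  induction x using TensorProduct.induction_on with
  | zero => simp
  | tmul u v => simp [map12_tmul]
  | add y z hy hz => simp only [add_tmul, map_add, hy, hz]

lemma map12_id : map12 (LinearMap.id : V ⊗[k] V →ₗ[k] V ⊗[k] V) = LinearMap.id := by
  apply ext3; intro a b c; simp [map12_tmul]

lemma map23_comp (f g : V ⊗[k] V →ₗ[k] V ⊗[k] V) :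
    map23 (f ∘ₗ g) = map23 f ∘ₗ map23 g := by
  simp [map23, lTensor_comp]

lemma map23_id : map23 (LinearMap.id : V ⊗[k] V →ₗ[k] V ⊗[k] V) = LinearMap.id := by
  simp [map23]

lemma map13_tmul (f : V ⊗[k] V →ₗ[k] V ⊗[k] V) (a b c : V) :
    map13 f (a ⊗ₜ (b ⊗ₜ c)) =
      (flipMap k V).lTensor V ((TensorProduct.assoc k V V V) (f (a ⊗ₜ c) ⊗ₜ b)) := by
  simp [map13, flipMap, map12_tmul]

lemma map13_comp (f g : V ⊗[k] V →ₗ[k] V ⊗[k] V) :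
    map13 (f ∘ₗ g) = map13 f ∘ₗ map13 g := by
  apply ext3; intro a b c
  simp only [LinearMap.comp_apply, map13_tmul]
  generalize g (a ⊗ₜ c) = x
  induction x using TensorProduct.induction_on with
  | zero => simp
  | tmul u v => simp [map13_tmul, flipMap]
  | add y z hy hz => simp only [add_tmul, map_add, hy, hz]

lemma map13_id : map13 (LinearMap.id : V ⊗[k] V →ₗ[k] V ⊗[k] V) = LinearMap.id := by
  apply ext3; intro a b c; simp [map13_tmul, flipMap]

lemma flipMap_flip_flip : (flipMap k V) ∘ₗ (flipMap k V) = LinearMap.id := by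
  apply TensorProduct.ext'; intro a b; simp [flipMap]

-- conjugation lemmas
lemma conj12 (f : V ⊗[k] V →ₗ[k] V ⊗[k] V) :
    bigFlip k V ∘ₗ map12 f ∘ₗ bigFlip k V = map23 (flipMap k V ∘ₗ f ∘ₗ flipMap k V) := by
  apply ext3; intro a b c
  simp only [LinearMap.comp_apply, bigFlip_tmul, map12_tmul, map23_tmul, flipMap,
    LinearEquiv.coe_coe, TensorProduct.comm_tmul]
  generalize f (c ⊗ₜ b) = x
  induction x using TensorProduct.induction_on with
  | zero => simp
  | tmul u v => simp [bigFlip_tmul]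
  | add y z hy hz => simp only [add_tmul, map_add, tmul_add, hy, hz]

lemma conj23 (f : V ⊗[k] V →ₗ[k] V ⊗[k] V) :
    bigFlip k V ∘ₗ map23 f ∘ₗ bigFlip k V = map12 (flipMap k V ∘ₗ f ∘ₗ flipMap k V) := by
  apply ext3; intro a b c
  simp only [LinearMap.comp_apply, bigFlip_tmul, map12_tmul, map23_tmul, flipMap,
    LinearEquiv.coe_coe, TensorProduct.comm_tmul]
  generalize f (b ⊗ₜ a) = x
  induction x using TensorProduct.induction_on with
  | zero => simp
  | tmul u v => simp [bigFlip_tmul]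
  | add y z hy hz => simp only [tmul_add, map_add, add_tmul, hy, hz]

lemma conj13 (f : V ⊗[k] V →ₗ[k] V ⊗[k] V) :
    bigFlip k V ∘ₗ map13 f ∘ₗ bigFlip k V = map13 (flipMap k V ∘ₗ f ∘ₗ flipMap k V) := by
  apply ext3; intro a b c
  simp only [LinearMap.comp_apply, bigFlip_tmul, map13_tmul, flipMap,
    LinearEquiv.coe_coe, TensorProduct.comm_tmul]
  generalize f (c ⊗ₜ a) = x
  induction x using TensorProduct.induction_on with
  | zero => simp
  | tmul u v => simp [bigFlip_tmul, flipMap]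
  | add y z hy hz => simp only [add_tmul, map_add, tmul_add, hy, hz]

end Aux

/-- a bijective `R` is a cocommutative solution of the Hopf equation iff
`τ∘R⁻¹∘τ` is a commutative solution of the Hopf equation. -/
theorem cocommutative_hopf_iff_flip_inv_commutative (k V : Type*) [Field k] [AddCommGroup V]
    [Module k V] (R : V ⊗[k] V ≃ₗ[k] V ⊗[k] V) :
    (IsHopfSolution R.toLinearMap ∧
        map13 R.toLinearMap ∘ₗ map23 R.toLinearMap = map23 R.toLinearMap ∘ₗ map13 R.toLinearMap)
      ↔ (IsHopfSolution (flipMap k V ∘ₗ R.symm.toLinearMap ∘ₗ flipMap k V) ∧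
          map12 (flipMap k V ∘ₗ R.symm.toLinearMap ∘ₗ flipMap k V) ∘ₗ
              map13 (flipMap k V ∘ₗ R.symm.toLinearMap ∘ₗ flipMap k V)
            = map13 (flipMap k V ∘ₗ R.symm.toLinearMap ∘ₗ flipMap k V) ∘ₗ
              map12 (flipMap k V ∘ₗ R.symm.toLinearMap ∘ₗ flipMap k V)) := by
  set S : V ⊗[k] V →ₗ[k] V ⊗[k] V := flipMap k V ∘ₗ R.symm.toLinearMap ∘ₗ flipMap k V with hS
  have hRR' : R.toLinearMap ∘ₗ R.symm.toLinearMap = LinearMap.id := by ext x; simp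
  have hR'R : R.symm.toLinearMap ∘ₗ R.toLinearMap = LinearMap.id := by ext x; simp
  -- units in End k (V ⊗ (V ⊗ V))
  have one_eq : (1 : Module.End k (V ⊗[k] (V ⊗[k] V))) = LinearMap.id := rfl
  let a : (Module.End k (V ⊗[k] (V ⊗[k] V)))ˣ := ⟨map12 R.toLinearMap, map12 R.symm.toLinearMap,
    by rw [Module.End.mul_eq_comp, ← map12_comp, hRR', map12_id, one_eq],
    by rw [Module.End.mul_eq_comp, ← map12_comp, hR'R, map12_id, one_eq]⟩
  let b : (Module.End k (V ⊗[k] (V ⊗[k] V)))ˣ := ⟨map23 R.toLinearMap, map23 R.symm.toLinearMap,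
    by rw [Module.End.mul_eq_comp, ← map23_comp, hRR', map23_id, one_eq],
    by rw [Module.End.mul_eq_comp, ← map23_comp, hR'R, map23_id, one_eq]⟩
  let c : (Module.End k (V ⊗[k] (V ⊗[k] V)))ˣ := ⟨map13 R.toLinearMap, map13 R.symm.toLinearMap,
    by rw [Module.End.mul_eq_comp, ← map13_comp, hRR', map13_id, one_eq],
    by rw [Module.End.mul_eq_comp, ← map13_comp, hR'R, map13_id, one_eq]⟩
  let p : (Module.End k (V ⊗[k] (V ⊗[k] V)))ˣ := ⟨bigFlip k V, bigFlip k V,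
    by rw [Module.End.mul_eq_comp, bigFlip_bigFlip, one_eq],
    by rw [Module.End.mul_eq_comp, bigFlip_bigFlip, one_eq]⟩
  have hp : p * p = 1 := by
    apply Units.ext
    show (bigFlip k V : Module.End k (V ⊗[k] (V ⊗[k] V))) * bigFlip k V = 1
    rw [Module.End.mul_eq_comp, bigFlip_bigFlip, one_eq]
  have h12 : map12 S = ((p * b⁻¹ * p : (Module.End k (V ⊗[k] (V ⊗[k] V)))ˣ) : Module.End k (V ⊗[k] (V ⊗[k] V))) := by
    show map12 S = (bigFlip k V : Module.End k (V ⊗[k] (V ⊗[k] V))) * map23 R.symm.toLinearMap * bigFlip k V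
    rw [Module.End.mul_eq_comp, Module.End.mul_eq_comp, comp_assoc, conj23, hS]
  have h23 : map23 S = ((p * a⁻¹ * p : (Module.End k (V ⊗[k] (V ⊗[k] V)))ˣ) : Module.End k (V ⊗[k] (V ⊗[k] V))) := by
    show map23 S = (bigFlip k V : Module.End k (V ⊗[k] (V ⊗[k] V))) * map12 R.symm.toLinearMap * bigFlip k V
    rw [Module.End.mul_eq_comp, Module.End.mul_eq_comp, comp_assoc, conj12, hS]
  have h13 : map13 S = ((p * c⁻¹ * p : (Module.End k (V ⊗[k] (V ⊗[k] V)))ˣ) : Module.End k (V ⊗[k] (V ⊗[k] V))) := by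
    show map13 S = (bigFlip k V : Module.End k (V ⊗[k] (V ⊗[k] V))) * map13 R.symm.toLinearMap * bigFlip k V
    rw [Module.End.mul_eq_comp, Module.End.mul_eq_comp, comp_assoc, conj13, hS]
  have ha : map12 R.toLinearMap = ((a : (Module.End k (V ⊗[k] (V ⊗[k] V)))ˣ) : Module.End k (V ⊗[k] (V ⊗[k] V))) := rfl
  have hb : map23 R.toLinearMap = ((b : (Module.End k (V ⊗[k] (V ⊗[k] V)))ˣ) : Module.End k (V ⊗[k] (V ⊗[k] V))) := rfl
  have hc : map13 R.toLinearMap = ((c : (Module.End k (V ⊗[k] (V ⊗[k] V)))ˣ) : Module.End k (V ⊗[k] (V ⊗[k] V))) := rfl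
  apply and_congr
  · have keyH := aux_hopf a b c p hp
    constructor
    · intro h
      have hu : a * b = b * (c * a) := Units.ext h
      have h2 := congrArg Units.val (keyH.mp hu)
      show map12 S ∘ₗ map23 S = map23 S ∘ₗ map13 S ∘ₗ map12 S
      rw [h12, h23, h13]
      exact h2
    · intro h
      rw [IsHopfSolution, h12, h23, h13] at h
      have hu : p * b⁻¹ * p * (p * a⁻¹ * p) = p * a⁻¹ * p * (p * c⁻¹ * p * (p * b⁻¹ * p)) :=
        Units.ext h
      exact congrArg Units.val (keyH.mpr hu)
  · have keyC := aux_comm b c p hp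
    constructor
    · intro h
      have hu : c * b = b * c := Units.ext h
      have h2 := congrArg Units.val (keyC.mp hu)
      rw [h12, h13]
      exact h2
    · intro h
      rw [h12, h13] at h
      have hu : p * b⁻¹ * p * (p * c⁻¹ * p) = p * c⁻¹ * p * (p * b⁻¹ * p) := Units.ext h
      exact congrArg Units.val (keyC.mpr hu)
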